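/- If a polynomial f(x) = \prod_{i=1}^{m}(1 + a_i x) with all a_i > 0, and q \ge m, and a, b \ge 0 are reals such that ax^2 + bx + 1 has only real zeros, and p(x) is a polynomial with positive coefficients having only real zeros, then p(x)^{q-m} \prod_{i=1}^{m} (a x^2 + (b + a_i) x + 1) has only real zeros. -/

import Mathlib

open Polynomial

def OnlyRealZeros (P : Polynomial ℝ) : Prop :=
  ∀ z : ℂ, Polynomial.aeval z P = 0 → z.im = 0

def PosCoeffs (P : Polynomial ℝ) : Prop :=
  ∀ k ≤ P.natDegree, 0 < P.coeff k

lemma disc_of_real (a b : ℝ) (ha : 0 < a) (hb : 0 ≤ b)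
    (hquad : OnlyRealZeros (C a * X ^ 2 + C b * X + 1)) : 4 * a ≤ b ^ 2 := by
  by_contra h
  push_neg at h
  set s : ℝ := Real.sqrt (4 * a - b ^ 2) with hs
  have hs2 : s ^ 2 = 4 * a - b ^ 2 := Real.sq_sqrt (by linarith)
  have hspos : 0 < s := Real.sqrt_pos.mpr (by linarith)
  set z : ℂ := ((-b / (2 * a) : ℝ) : ℂ) + ((s / (2 * a) : ℝ) : ℂ) * Complex.I with hzdef
  have h2a : (2 * (a : ℂ)) ≠ 0 := by
    simp [Complex.ofReal_ne_zero, ne_of_gt ha]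
  have hz : Polynomial.aeval z (C a * X ^ 2 + C b * X + 1) = 0 := by
    simp only [map_add, map_mul, map_pow, aeval_X, aeval_C, map_one]
    rw [hzdef]
    field_simp
    ring_nf
    rw [Complex.I_sq]
    have : ((s : ℂ)) ^ 2 = ((4 * a - b ^ 2 : ℝ) : ℂ) := by
      rw [← hs2]; push_cast; ring
    simp only [Complex.coe_algebraMap]
    push_cast at this ⊢
    have ha0 : (a : ℂ) ≠ 0 := by exact_mod_cast ne_of_gt ha
    field_simp
    linear_combination (-1 : ℂ) * this
  have him := hquad z hz
  have : z.im = s / (2 * a) := by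
    rw [hzdef, Complex.add_im, Complex.ofReal_im, Complex.mul_im, Complex.ofReal_im,
      Complex.ofReal_re, Complex.I_im, Complex.I_re]
    ring
  rw [this] at him
  have := div_pos hspos (by linarith : (0:ℝ) < 2 * a)
  linarith

lemma quad_root_real (a c : ℝ) (ha : 0 ≤ a) (hc : 0 < c) (hd : 0 < a → 4 * a ≤ c ^ 2)
    (z : ℂ) (h : (a : ℂ) * z ^ 2 + (c : ℂ) * z + 1 = 0) : z.im = 0 := by
  set r := z.re
  set s := z.im
  have hre : a * (r ^ 2 - s ^ 2) + c * r + 1 = 0 := by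
    have := congrArg Complex.re h
    simpa [Complex.add_re, Complex.mul_re, Complex.ofReal_re, Complex.ofReal_im,
      pow_two, Complex.mul_im] using this
  have him : a * (2 * r * s) + c * s = 0 := by
    have h2 := congrArg Complex.im h
    simp only [Complex.add_im, Complex.mul_im, Complex.ofReal_re, Complex.ofReal_im,
      pow_two, Complex.mul_re, Complex.one_im, Complex.zero_im, zero_mul, mul_zero,
      zero_add, add_zero, sub_zero] at h2
    linarith [h2]
  by_contra hs
  rcases lt_or_eq_of_le ha with ha' | ha'
  · have hd' := hd ha'
    have h3 : 2 * a * r + c = 0 := by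
      have : s * (2 * a * r + c) = 0 := by linarith [him]
      rcases mul_eq_zero.mp this with h | h
      · exact absurd h hs
      · exact h
    have hs2 : 0 < s ^ 2 := by positivity
    nlinarith [mul_pos ha' hs2, sq_nonneg (2 * a * r + c)]
  · -- a = 0
    rw [← ha'] at him
    simp at him
    rcases him with h | h
    · exact absurd h (ne_of_gt hc)
    · exact hs h

theorem stmt_14 (m q : ℕ) (hq : m ≤ q) (a b : ℝ) (ha : 0 ≤ a) (hb : 0 ≤ b)
    (hquad : OnlyRealZeros (C a * X ^ 2 + C b * X + 1))
    (ai : Fin m → ℝ) (hai : ∀ i, 0 < ai i)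
    (f : Polynomial ℝ) (hf : f = ∏ i, (1 + C (ai i) * X))
    (p : Polynomial ℝ) (hp : PosCoeffs p) (hpr : OnlyRealZeros p) :
    OnlyRealZeros (p ^ (q - m) * ∏ i, (C a * X ^ 2 + C (b + ai i) * X + 1)) := by
  intro z hz
  simp only [map_mul, map_pow, map_prod, map_add, map_one, aeval_X, aeval_C] at hz
  rcases mul_eq_zero.mp hz with h | h
  · exact hpr z ((pow_eq_zero_iff' .. ).mp h).1
  · obtain ⟨i, _, hi⟩ := Finset.prod_eq_zero_iff.mp h
    refine quad_root_real a (b + ai i) ha (by linarith [hai i]) ?_ z ?_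
    · intro ha'
      have hd := disc_of_real a b ha' hb hquad
      nlinarith [hai i, sq_nonneg (ai i)]
    · simp only [Complex.coe_algebraMap] at hi
      push_cast
      linear_combination hi
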